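/- The no broken circuit complex of a matroid M of rank r+1 is pure of dimension r: every maximal subset containing no broken circuit is a basis of M. -/

import Mathlib

open Set

/-- A circuit of a matroid: a minimal dependent set. -/
def Matroid.IsCircuit' {α : Type*} (M : Matroid α) (C : Set α) : Prop :=
  M.Dep C ∧ ∀ D ⊂ C, M.Indep D

/-- A broken circuit: a circuit with its least element (in the natural order) removed. -/
def Matroid.IsBrokenCircuit {n : ℕ} (M : Matroid (Fin (n + 1))) (B : Set (Fin (n + 1))) : Prop :=
  ∃ C m, M.IsCircuit' C ∧ m ∈ C ∧ (∀ k ∈ C, m ≤ k) ∧ B = C \ {m}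

/-- Any dependent set in a matroid on a finite type contains a circuit. -/
lemma exists_circuit'_subset {n : ℕ} (M : Matroid (Fin (n + 1))) {S : Set (Fin (n + 1))}
    (hS : M.Dep S) : ∃ C ⊆ S, M.IsCircuit' C := by
  set s : Set (Set (Fin (n + 1))) := {D | D ⊆ S ∧ M.Dep D} with hs
  obtain ⟨C, hCs, hCmin⟩ : ∃ C ∈ s, ∀ D ∈ s, id D ≤ id C → id C = id D := by
    obtain ⟨C, hC⟩ := s.toFinite.exists_minimal ⟨S, subset_rfl, hS⟩
    exact ⟨C, hC.1, fun D hD h => hC.eq_of_ge hD h⟩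
  refine ⟨C, hCs.1, hCs.2, fun D hD => ?_⟩
  by_contra hDind
  have hDdep : M.Dep D := ⟨hDind, hD.subset.trans hCs.2.subset_ground⟩
  have := hCmin D ⟨hD.subset.trans hCs.1, hDdep⟩ (le_of_lt hD)
  exact hD.ne this.symm

/-- If `C` is a circuit and `m ∈ C`, then `m` lies in the closure of `C \ {m}`. -/
lemma mem_closure_of_circuit' {n : ℕ} {M : Matroid (Fin (n + 1))} (hE : M.E = Set.univ)
    {C : Set (Fin (n + 1))} (hC : M.IsCircuit' C) {m : Fin (n + 1)} (hm : m ∈ C) :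
    m ∈ M.closure (C \ {m}) := by
  have hind : M.Indep (C \ {m}) := hC.2 _ (sdiff_singleton_ssubset.2 hm)
  have hins : ¬ M.Indep (insert m (C \ {m})) := by
    rw [Set.insert_diff_singleton, Set.insert_eq_of_mem hm]
    exact hC.1.not_indep
  rw [hind.insert_indep_iff_of_notMem (fun h => h.2 rfl)] at hins
  by_contra hcl
  exact hins ⟨by rw [hE]; exact mem_univ m, hcl⟩

/-- the no broken circuit complex of a loopless matroid of rank `r+1` is pure of
dimension `r`: every maximal set containing no broken circuit is a basis of `M`
(in particular it has `r+1` elements). -/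
theorem NBC_pure {n r : ℕ} (M : Matroid (Fin (n + 1)))
    (hE : M.E = Set.univ)
    (hloopless : ∀ e : Fin (n + 1), M.Indep {e})
    (hrank : ∀ B : Set (Fin (n + 1)), M.IsBase B → B.ncard = r + 1)
    (S : Set (Fin (n + 1)))
    (hS : ∀ B, M.IsBrokenCircuit B → ¬ B ⊆ S)
    (hSmax : ∀ T, (∀ B, M.IsBrokenCircuit B → ¬ B ⊆ T) → S ⊆ T → S = T) :
    M.IsBase S ∧ S.ncard = r + 1 := by
  have hSE : S ⊆ M.E := by rw [hE]; exact subset_univ S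
  -- S is independent
  have hSindep : M.Indep S := by
    by_contra h
    obtain ⟨C, hCS, hC⟩ := exists_circuit'_subset M ⟨h, hSE⟩
    have hCne : C.Nonempty := by
      rcases C.eq_empty_or_nonempty with rfl | hne
      · exact absurd M.empty_indep hC.1.not_indep
      · exact hne
    obtain ⟨m, hmC, hmin⟩ := Set.exists_min_image C id C.toFinite hCne
    exact hS (C \ {m}) ⟨C, m, hC, hmC, hmin, rfl⟩ ((diff_subset).trans hCS)
  suffices hbase : M.IsBase S from ⟨hbase, hrank S hbase⟩
  by_contra hnb
  -- there is an element outside the closure of S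
  have hne : {x | x ∉ M.closure S}.Nonempty := by
    by_contra h
    rw [Set.not_nonempty_iff_eq_empty] at h
    apply hnb
    apply hSindep.isBase_of_ground_subset_closure
    intro x _
    by_contra hx
    have hx' : x ∈ {x | x ∉ M.closure S} := hx
    rw [h] at hx'
    exact hx'
  obtain ⟨e, he, hemin⟩ := Set.exists_min_image _ id ({x | x ∉ M.closure S}).toFinite hne
  have heS : e ∉ S := fun h => he (M.subset_closure S hSE h)
  have hins : M.Indep (insert e S) := by
    rw [hSindep.insert_indep_iff_of_notMem heS]
    exact ⟨by rw [hE]; exact mem_univ e, he⟩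
  -- insert e S contains no broken circuit
  have hT : ∀ B, M.IsBrokenCircuit B → ¬ B ⊆ insert e S := by
    rintro B ⟨C, m, hC, hmC, hmin, rfl⟩ hBsub
    have hmni : m ∉ insert e S := by
      intro hmem
      refine hC.1.not_indep (hins.subset fun x hx => ?_)
      by_cases hxm : x = m
      · exact hxm ▸ hmem
      · exact hBsub ⟨hx, hxm⟩
    have heB : e ∈ C \ {m} := by
      by_contra h
      exact hS (C \ {m}) ⟨C, m, hC, hmC, hmin, rfl⟩
        (fun x hx => (hBsub hx).resolve_left (fun hxe => h (hxe ▸ hx)))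
    have hme : m < e :=
      lt_of_le_of_ne (hmin e heB.1) (fun h => hmni (h ▸ mem_insert e S))
    have hmcl : m ∈ M.closure S := by
      by_contra h
      exact absurd (hemin m h) (not_le.2 hme)
    have hecl : e ∈ M.closure (C \ {e}) := mem_closure_of_circuit' hE hC heB.1
    have hsub : C \ {e} ⊆ M.closure S := by
      intro x hx
      by_cases hxm : x = m
      · exact hxm ▸ hmcl
      · have : x ∈ insert e S := hBsub ⟨hx.1, hxm⟩
        exact M.subset_closure S hSE (this.resolve_left hx.2)
    have : e ∈ M.closure S := by
      have := M.closure_subset_closure hsub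
      rw [M.closure_closure] at this
      exact this hecl
    exact he this
  exact heS ((hSmax _ hT (subset_insert e S)) ▸ mem_insert e S)
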